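/- Let G be a connected graph with chromatic number χ attaining Hoffman's bound, i.e., χ = 1 − λ₁/λ_n. Then the partition of V into the χ color classes of any proper χ-coloring is weight-regular, and the smallest eigenvalue λ_n of G has multiplicity at least χ − 1. -/

import Mathlib

open Finset Matrix

noncomputable def bstar {V : Type*} [Fintype V] [DecidableEq V] {ι : Type*} [DecidableEq ι]
    (G : SimpleGraph V) [DecidableRel G.Adj] (ν : V → ℝ) (c : V → ι) (u : V) (j : ι) : ℝ :=
  (ν u)⁻¹ * ∑ v ∈ (G.neighborFinset u).filter (fun v => c v = j), ν v

def WeightRegular {V : Type*} [Fintype V] [DecidableEq V] {ι : Type*} [DecidableEq ι]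
    (G : SimpleGraph V) [DecidableRel G.Adj] (ν : V → ℝ) (c : V → ι) : Prop :=
  ∀ (j : ι) (u v : V), c u = c v → bstar G ν c u j = bstar G ν c v j

section HoffAux

variable {V : Type*} [Fintype V] [DecidableEq V]

private lemma hoff_UstarU (A : Matrix V V ℝ) (hA : A.IsHermitian) (x : V → ℝ) :
    (hA.eigenvectorUnitary : Matrix V V ℝ) *ᵥ ((star (hA.eigenvectorUnitary : Matrix V V ℝ)) *ᵥ x) = x := by
  rw [Matrix.mulVec_mulVec, (Matrix.mem_unitaryGroup_iff).mp (hA.eigenvectorUnitary).2, Matrix.one_mulVec]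

private lemma hoff_dot_mulVecU (A : Matrix V V ℝ) (hA : A.IsHermitian) (x z : V → ℝ) :
    x ⬝ᵥ ((hA.eigenvectorUnitary : Matrix V V ℝ) *ᵥ z)
      = ((star (hA.eigenvectorUnitary : Matrix V V ℝ)) *ᵥ x) ⬝ᵥ z := by
  have hstar : star (hA.eigenvectorUnitary : Matrix V V ℝ) = (hA.eigenvectorUnitary : Matrix V V ℝ)ᵀ := by
    ext i j; simp [Matrix.star_apply]
  rw [Matrix.dotProduct_mulVec, hstar, ← Matrix.mulVec_transpose]

private lemma hoff_dot_self (A : Matrix V V ℝ) (hA : A.IsHermitian) (x : V → ℝ) :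
    x ⬝ᵥ x = ∑ i, ((star (hA.eigenvectorUnitary : Matrix V V ℝ)) *ᵥ x) i ^ 2 := by
  calc x ⬝ᵥ x = x ⬝ᵥ ((hA.eigenvectorUnitary : Matrix V V ℝ) *ᵥ
        ((star (hA.eigenvectorUnitary : Matrix V V ℝ)) *ᵥ x)) := by rw [hoff_UstarU]
    _ = ((star (hA.eigenvectorUnitary : Matrix V V ℝ)) *ᵥ x) ⬝ᵥ
        ((star (hA.eigenvectorUnitary : Matrix V V ℝ)) *ᵥ x) := hoff_dot_mulVecU A hA _ _
    _ = _ := by simp [dotProduct, sq]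

private lemma hoff_mulVec_decomp (A : Matrix V V ℝ) (hA : A.IsHermitian) (x : V → ℝ) :
    A *ᵥ x = (hA.eigenvectorUnitary : Matrix V V ℝ) *ᵥ
      (fun i => hA.eigenvalues i * ((star (hA.eigenvectorUnitary : Matrix V V ℝ)) *ᵥ x) i) := by
  have hD : diagonal (RCLike.ofReal ∘ hA.eigenvalues) *ᵥ
      ((star (hA.eigenvectorUnitary : Matrix V V ℝ)) *ᵥ x)
      = fun i => hA.eigenvalues i * ((star (hA.eigenvectorUnitary : Matrix V V ℝ)) *ᵥ x) i := by
    ext i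
    rw [Matrix.mulVec_diagonal]
    simp
  conv_lhs => rw [hA.spectral_theorem, Unitary.conjStarAlgAut_apply]
  rw [mul_assoc, ← Matrix.mulVec_mulVec, ← Matrix.mulVec_mulVec, hD]

private lemma hoff_dot_mulVec (A : Matrix V V ℝ) (hA : A.IsHermitian) (x : V → ℝ) :
    x ⬝ᵥ (A *ᵥ x) = ∑ i, hA.eigenvalues i * ((star (hA.eigenvectorUnitary : Matrix V V ℝ)) *ᵥ x) i ^ 2 := by
  rw [hoff_mulVec_decomp A hA x, hoff_dot_mulVecU A hA]
  simp only [dotProduct]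
  exact Finset.sum_congr rfl fun i _ => by ring

private lemma hoff_rayleigh_le (A : Matrix V V ℝ) (hA : A.IsHermitian) (lamn : ℝ)
    (hnmin : ∀ i, lamn ≤ hA.eigenvalues i) (x : V → ℝ) :
    lamn * (x ⬝ᵥ x) ≤ x ⬝ᵥ (A *ᵥ x) := by
  rw [hoff_dot_mulVec A hA x, hoff_dot_self A hA x, Finset.mul_sum]
  exact Finset.sum_le_sum fun i _ => mul_le_mul_of_nonneg_right (hnmin i) (sq_nonneg _)

private lemma hoff_rayleigh_eq (A : Matrix V V ℝ) (hA : A.IsHermitian) (lamn : ℝ)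
    (hnmin : ∀ i, lamn ≤ hA.eigenvalues i) (x : V → ℝ)
    (heq : x ⬝ᵥ (A *ᵥ x) = lamn * (x ⬝ᵥ x)) :
    A *ᵥ x = lamn • x := by
  have hterm : ∀ i ∈ Finset.univ, (0:ℝ) ≤ (hA.eigenvalues i - lamn) *
      ((star (hA.eigenvectorUnitary : Matrix V V ℝ)) *ᵥ x) i ^ 2 :=
    fun i _ => mul_nonneg (by linarith [hnmin i]) (sq_nonneg _)
  have hzero : ∑ i, (hA.eigenvalues i - lamn) *
      ((star (hA.eigenvectorUnitary : Matrix V V ℝ)) *ᵥ x) i ^ 2 = 0 := by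
    have h1 := heq
    rw [hoff_dot_mulVec A hA x, hoff_dot_self A hA x, Finset.mul_sum] at h1
    have e1 : ∑ i, (hA.eigenvalues i - lamn) *
        ((star (hA.eigenvectorUnitary : Matrix V V ℝ)) *ᵥ x) i ^ 2
        = (∑ i, hA.eigenvalues i * ((star (hA.eigenvectorUnitary : Matrix V V ℝ)) *ᵥ x) i ^ 2)
          - ∑ i, lamn * ((star (hA.eigenvectorUnitary : Matrix V V ℝ)) *ᵥ x) i ^ 2 := by
      rw [← Finset.sum_sub_distrib]
      exact Finset.sum_congr rfl fun i _ => by ring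
    rw [e1, h1, sub_self]
  have hall := (Finset.sum_eq_zero_iff_of_nonneg hterm).mp hzero
  have hev : ∀ i, hA.eigenvalues i * ((star (hA.eigenvectorUnitary : Matrix V V ℝ)) *ᵥ x) i
      = lamn * ((star (hA.eigenvectorUnitary : Matrix V V ℝ)) *ᵥ x) i := by
    intro i
    have h := hall i (Finset.mem_univ i)
    rcases mul_eq_zero.mp h with h1 | h2
    · have : hA.eigenvalues i = lamn := by linarith [sub_eq_zero.mp h1]
      rw [this]
    · have : ((star (hA.eigenvectorUnitary : Matrix V V ℝ)) *ᵥ x) i = 0 :=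
        pow_eq_zero_iff (by norm_num) |>.mp h2
      rw [this]; ring
  rw [hoff_mulVec_decomp A hA x]
  have hfun : (fun i => hA.eigenvalues i * ((star (hA.eigenvectorUnitary : Matrix V V ℝ)) *ᵥ x) i)
      = lamn • ((star (hA.eigenvectorUnitary : Matrix V V ℝ)) *ᵥ x) := by
    ext i; simpa using hev i
  rw [hfun, Matrix.mulVec_smul, hoff_UstarU]

private lemma hoff_eigencount (A : Matrix V V ℝ) (hA : A.IsHermitian) (lamn : ℝ)
    {ι : Type*} [Fintype ι] (w : ι → V → ℝ)
    (hw : ∀ j, A *ᵥ w j = lamn • w j) (hind : LinearIndependent ℝ w) :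
    Fintype.card ι ≤ (Finset.univ.filter (fun i => hA.eigenvalues i = lamn)).card := by
  classical
  let T : (V → ℝ) →ₗ[ℝ] ({i : V // hA.eigenvalues i = lamn} → ℝ) :=
    { toFun := fun x s => ((star (hA.eigenvectorUnitary : Matrix V V ℝ)) *ᵥ x) s.1
      map_add' := fun a b => by ext s; simp [Matrix.mulVec_add]
      map_smul' := fun r a => by ext s; simp [Matrix.mulVec_smul] }
  have hTinj : ∀ x : V → ℝ, A *ᵥ x = lamn • x → T x = 0 → x = 0 := by
    intro x hx hTx
    have hyA : (star (hA.eigenvectorUnitary : Matrix V V ℝ)) *ᵥ (A *ᵥ x)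
        = fun i => hA.eigenvalues i * ((star (hA.eigenvectorUnitary : Matrix V V ℝ)) *ᵥ x) i := by
      rw [hoff_mulVec_decomp A hA x, Matrix.mulVec_mulVec,
        (Matrix.mem_unitaryGroup_iff').mp (hA.eigenvectorUnitary).2, Matrix.one_mulVec]
    have hy0 : (star (hA.eigenvectorUnitary : Matrix V V ℝ)) *ᵥ x = 0 := by
      ext i
      by_cases hi : hA.eigenvalues i = lamn
      · exact congrFun hTx ⟨i, hi⟩
      · have h1 := congrFun hyA i
        rw [hx, Matrix.mulVec_smul] at h1
        have h2 : lamn * ((star (hA.eigenvectorUnitary : Matrix V V ℝ)) *ᵥ x) i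
            = hA.eigenvalues i * ((star (hA.eigenvectorUnitary : Matrix V V ℝ)) *ᵥ x) i := by
          simpa using h1
        have h3 : (hA.eigenvalues i - lamn) *
            ((star (hA.eigenvectorUnitary : Matrix V V ℝ)) *ᵥ x) i = 0 := by
          linarith
        simpa [sub_ne_zero.mpr hi] using mul_eq_zero.mp h3
    have h4 := hoff_UstarU A hA x
    rw [hy0, Matrix.mulVec_zero] at h4
    exact h4.symm
  have hindT : LinearIndependent ℝ (fun j => T (w j)) := by
    rw [Fintype.linearIndependent_iff] at hind ⊢
    intro g hg
    have hx0 : (∑ j, g j • w j) = 0 := by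
      apply hTinj
      · have : A.mulVecLin (∑ j, g j • w j) = lamn • (∑ j, g j • w j) := by
          rw [map_sum, Finset.smul_sum]
          refine Finset.sum_congr rfl fun j _ => ?_
          rw [LinearMap.map_smul]
          simp only [Matrix.mulVecLin_apply, hw j]
          rw [smul_comm]
        simpa only [Matrix.mulVecLin_apply] using this
      · rw [map_sum]
        simp_rw [LinearMap.map_smul]
        exact hg
    exact hind g hx0
  calc Fintype.card ι ≤ Module.finrank ℝ ({i : V // hA.eigenvalues i = lamn} → ℝ) :=
        hindT.fintype_card_le_finrank
    _ = Fintype.card {i : V // hA.eigenvalues i = lamn} := Module.finrank_fintype_fun_eq_card ℝ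
    _ = (Finset.univ.filter (fun i => hA.eigenvalues i = lamn)).card := Fintype.card_subtype _

end HoffAux

/-- if a connected graph attains Hoffman's bound
`χ = 1 − λ₁/λ_n`, then the color classes of any proper `χ`-coloring form a
weight-regular partition, and the smallest eigenvalue has multiplicity at least
`χ − 1`. -/
theorem hoffman_coloring_weightRegular
    {V : Type*} [Fintype V] [DecidableEq V]
    (G : SimpleGraph V) [DecidableRel G.Adj]
    (hconn : G.Connected)
    (hedge : ∃ u v : V, G.Adj u v)
    (hA : (G.adjMatrix ℝ).IsHermitian)
    (lam1 lamn : ℝ)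
    (h1mem : ∃ i, hA.eigenvalues i = lam1) (h1max : ∀ i, hA.eigenvalues i ≤ lam1)
    (hnmem : ∃ i, hA.eigenvalues i = lamn) (hnmin : ∀ i, lamn ≤ hA.eigenvalues i)
    (ν : V → ℝ) (hpos : ∀ u, 0 < ν u)
    (heig : (G.adjMatrix ℝ).mulVec ν = lam1 • ν)
    (chi : ℕ) (hchi : G.chromaticNumber = (chi : ℕ∞))
    (hHoff : (chi : ℝ) = 1 - lam1 / lamn) :
    (∀ C : G.Coloring (Fin chi), WeightRegular G ν (fun u => C u))
    ∧ chi - 1 ≤ (Finset.univ.filter (fun i => hA.eigenvalues i = lamn)).card := by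
  classical
  obtain ⟨a0, b0, hab⟩ := hedge
  -- λ₁ > 0
  have hlam1pos : 0 < lam1 := by
    have h1 : (G.adjMatrix ℝ *ᵥ ν) a0 = lam1 * ν a0 := by rw [heig]; simp
    rw [G.adjMatrix_mulVec_apply] at h1
    have h2 : ν b0 ≤ ∑ w ∈ G.neighborFinset a0, ν w :=
      Finset.single_le_sum (fun w _ => (hpos w).le)
        (by simp [SimpleGraph.mem_neighborFinset, hab])
    nlinarith [hpos a0, hpos b0]
  -- no coloring with ≤ 1 colors
  have hno1 : ∀ n : ℕ, n ≤ 1 → ¬ G.Colorable n := by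
    rintro n hn ⟨C⟩
    have : Subsingleton (Fin n) := by
      rcases Nat.le_one_iff_eq_zero_or_eq_one.mp hn with h | h <;> subst h <;> infer_instance
    exact C.valid hab (Subsingleton.elim _ _)
  have hchi2 : 2 ≤ chi := by
    by_contra h
    push_neg at h
    have hcol : G.Colorable chi := by
      rw [← SimpleGraph.chromaticNumber_le_iff_colorable, hchi]
    exact hno1 chi (by omega) hcol
  have hlamn_ne : lamn ≠ 0 := by
    intro h0
    rw [h0, div_zero] at hHoff
    have h1 : (chi : ℝ) = 1 := by simpa using hHoff
    have h2 : chi = 1 := by exact_mod_cast h1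
    omega
  have hlamn_neg : lamn < 0 := by
    rcases lt_or_gt_of_ne hlamn_ne with h | h
    · exact h
    · exfalso
      have hq : 0 < lam1 / lamn := div_pos hlam1pos h
      have h1 : (chi : ℝ) < 1 := by rw [hHoff]; linarith
      have h2 : (2 : ℝ) ≤ (chi : ℝ) := by exact_mod_cast hchi2
      linarith
  have hrne : (chi : ℝ) ≠ 0 := Nat.cast_ne_zero.mpr (by omega)
  have hkey : lam1 = lamn * (1 - (chi : ℝ)) := by
    have h1 : lam1 / lamn = 1 - (chi : ℝ) := by linarith
    rw [div_eq_iff hlamn_ne] at h1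
    linarith
  -- surjectivity of any chi-coloring
  have hsurj : ∀ C : G.Coloring (Fin chi), Function.Surjective C := by
    intro C
    by_contra hns
    rw [Function.Surjective] at hns
    push_neg at hns
    obtain ⟨j0, hj0⟩ := hns
    set R := Finset.univ.image (fun v => C v) with hR
    have hC' : G.Colorable (Fintype.card {x : Fin chi // x ∈ R}) := by
      exact (SimpleGraph.Coloring.mk
        (fun v => (⟨C v, Finset.mem_image_of_mem _ (Finset.mem_univ v)⟩ : {x : Fin chi // x ∈ R}))
        (fun h => by simpa [Subtype.ext_iff] using C.valid h)).colorable
    rw [Fintype.card_coe] at hC'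
    have hsub : R ⊆ Finset.univ.erase j0 := by
      intro x hx
      rw [Finset.mem_erase]
      refine ⟨?_, Finset.mem_univ x⟩
      rintro rfl
      obtain ⟨v, _, hv⟩ := Finset.mem_image.mp hx
      exact hj0 v hv
    have hcard : R.card ≤ chi - 1 := by
      calc R.card ≤ (Finset.univ.erase j0).card := Finset.card_le_card hsub
        _ = chi - 1 := by rw [Finset.card_erase_of_mem (Finset.mem_univ _)]; simp
    have hcol : G.Colorable (chi - 1) := hC'.mono hcard
    rw [← SimpleGraph.chromaticNumber_le_iff_colorable, hchi, Nat.cast_le] at hcol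
    omega
  -- the key eigen-equation for the vectors w_j = ν - χ·u_j
  have key : ∀ (C : G.Coloring (Fin chi)) (j : Fin chi),
      G.adjMatrix ℝ *ᵥ (ν - (chi : ℝ) • (fun v => if C v = j then ν v else 0))
        = lamn • (ν - (chi : ℝ) • (fun v => if C v = j then ν v else 0)) := by
    intro C
    set u_ : Fin chi → V → ℝ := fun j v => if C v = j then ν v else 0 with hu_
    set s : Fin chi → ℝ := fun j => u_ j ⬝ᵥ u_ j with hs
    set S : ℝ := ν ⬝ᵥ ν with hS
    have hu_dot_nu : ∀ j, u_ j ⬝ᵥ ν = s j := by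
      intro j
      refine Finset.sum_congr rfl fun v _ => ?_
      by_cases h : C v = j <;> simp [hu_, h]
    have hnu_dot_u : ∀ j, ν ⬝ᵥ u_ j = s j := by
      intro j
      rw [dotProduct_comm]
      exact hu_dot_nu j
    have hs_sum : ∑ j, s j = S := by
      simp only [hs, hS, dotProduct]
      rw [Finset.sum_comm]
      refine Finset.sum_congr rfl fun v _ => ?_
      have e : ∀ x : Fin chi, u_ x v * u_ x v = if x = C v then ν v * ν v else 0 := by
        intro x
        by_cases h : C v = x
        · subst h; simp [hu_]
        · simp only [hu_, if_neg h, zero_mul]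
          rw [if_neg (fun hh : x = C v => h hh.symm)]
      rw [Finset.sum_congr rfl fun x _ => e x]
      simp
    have hAu_zero : ∀ (j : Fin chi) (v : V), C v = j → (G.adjMatrix ℝ *ᵥ u_ j) v = 0 := by
      intro j v hv
      rw [G.adjMatrix_mulVec_apply]
      refine Finset.sum_eq_zero fun w hw => ?_
      have hadj : G.Adj v w := (SimpleGraph.mem_neighborFinset _ _ _).mp hw
      have : C w ≠ j := fun hcw => C.valid hadj (by rw [hv, hcw])
      simp [hu_, this]
    have F1 : ∀ j, u_ j ⬝ᵥ (G.adjMatrix ℝ *ᵥ u_ j) = 0 := by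
      intro j
      refine Finset.sum_eq_zero fun v _ => ?_
      by_cases h : C v = j
      · rw [hAu_zero j v h, mul_zero]
      · simp [hu_, h]
    have F2 : ∀ j, u_ j ⬝ᵥ (G.adjMatrix ℝ *ᵥ ν) = lam1 * s j := by
      intro j
      rw [heig, dotProduct_smul, hu_dot_nu]
      simp [smul_eq_mul]
    have F3 : ν ⬝ᵥ (G.adjMatrix ℝ *ᵥ ν) = lam1 * S := by
      rw [heig, dotProduct_smul, hS]
      simp [smul_eq_mul]
    have F4 : ∀ j, ν ⬝ᵥ (G.adjMatrix ℝ *ᵥ u_ j) = lam1 * s j := by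
      intro j
      rw [Matrix.dotProduct_mulVec, ← Matrix.mulVec_transpose, G.transpose_adjMatrix, heig]
      rw [smul_dotProduct, hnu_dot_u j]
      simp [smul_eq_mul]
    -- quadratic forms
    have hQ : ∀ j, (ν - (chi : ℝ) • u_ j) ⬝ᵥ (G.adjMatrix ℝ *ᵥ (ν - (chi : ℝ) • u_ j))
        = lam1 * S - 2 * (chi : ℝ) * lam1 * s j := by
      intro j
      simp only [Matrix.mulVec_sub, Matrix.mulVec_smul, sub_dotProduct,
        dotProduct_sub, smul_dotProduct, dotProduct_smul, smul_eq_mul]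
      rw [F1 j, F2 j, F3, F4 j]
      ring
    have hN : ∀ j, (ν - (chi : ℝ) • u_ j) ⬝ᵥ (ν - (chi : ℝ) • u_ j)
        = S - 2 * (chi : ℝ) * s j + (chi : ℝ)^2 * s j := by
      intro j
      simp only [sub_dotProduct, dotProduct_sub,
        smul_dotProduct, dotProduct_smul, smul_eq_mul]
      rw [hu_dot_nu j, hnu_dot_u j]
      ring
    -- sum of deficiencies is zero
    set d : Fin chi → ℝ := fun j =>
      ((ν - (chi : ℝ) • u_ j) ⬝ᵥ (G.adjMatrix ℝ *ᵥ (ν - (chi : ℝ) • u_ j)))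
        - lamn * ((ν - (chi : ℝ) • u_ j) ⬝ᵥ (ν - (chi : ℝ) • u_ j)) with hd
    have hd_nonneg : ∀ j ∈ Finset.univ, 0 ≤ d j := fun j _ =>
      sub_nonneg.mpr (hoff_rayleigh_le (G.adjMatrix ℝ) hA lamn hnmin _)
    have hd_sum : ∑ j, d j = 0 := by
      have e1 : ∀ j, d j = (lam1 * S - lamn * S)
          - (2 * (chi : ℝ) * lam1 - lamn * (2 * (chi : ℝ) - (chi : ℝ)^2)) * s j := by
        intro j
        simp only [hd]
        rw [hQ j, hN j]
        ring
      rw [Finset.sum_congr rfl fun j _ => e1 j]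
      rw [Finset.sum_sub_distrib, Finset.sum_const, ← Finset.mul_sum, hs_sum,
        Finset.card_univ, Fintype.card_fin, nsmul_eq_mul]
      rw [hkey]
      ring
    have hd_zero : ∀ j, d j = 0 := by
      have := (Finset.sum_eq_zero_iff_of_nonneg hd_nonneg).mp hd_sum
      exact fun j => this j (Finset.mem_univ j)
    intro j
    apply hoff_rayleigh_eq (G.adjMatrix ℝ) hA lamn hnmin
    have h5 := hd_zero j
    simp only [hd] at h5
    linarith
  constructor
  · -- weight regularity
    intro C
    have hbstar : ∀ (j : Fin chi) (u : V),
        bstar G ν (fun v => C v) u j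
          = (lam1 - lamn) / (chi : ℝ) + lamn * (if C u = j then 1 else 0) := by
      intro j u
      have h := congrFun (key C j) u
      simp only [Pi.sub_apply, Pi.smul_apply, smul_eq_mul] at h
      rw [Matrix.mulVec_sub, Matrix.mulVec_smul] at h
      have h2 : (G.adjMatrix ℝ *ᵥ ν) u = lam1 * ν u := by rw [heig]; simp
      have h3 : (G.adjMatrix ℝ *ᵥ (fun v => if C v = j then ν v else 0)) u
          = ∑ v ∈ (G.neighborFinset u).filter (fun v => C v = j), ν v := by
        rw [G.adjMatrix_mulVec_apply, Finset.sum_filter]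
      have h4 := h
      simp only [Pi.sub_apply, Pi.smul_apply, smul_eq_mul] at h4
      rw [h2, h3] at h4
      -- h4 : lam1 * ν u - chi * Σ = lamn * (ν u - chi * (if C u = j then ν u else 0))
      have hnu : ν u ≠ 0 := (hpos u).ne'
      rw [bstar]
      have hsum : ∑ v ∈ (G.neighborFinset u).filter (fun v => C v = j), ν v
          = ((lam1 - lamn) / (chi : ℝ)) * ν u + lamn * (if C u = j then ν u else 0) := by
        field_simp
        by_cases hcu : C u = j <;> simp [hcu] at h4 ⊢ <;> nlinarith [h4]
      rw [hsum]
      by_cases hcu : C u = j <;> field_simp <;> simp only [hcu, ↓reduceIte] <;> ring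
    intro j u v hcuv
    rw [hbstar j u, hbstar j v]
    simp only at hcuv
    rw [hcuv]
  · -- multiplicity
    have hcol : G.Colorable chi := by
      rw [← SimpleGraph.chromaticNumber_le_iff_colorable, hchi]
    obtain ⟨C⟩ := hcol
    have hz0lt : 0 < chi := by omega
    set z0fin : Fin chi := ⟨0, hz0lt⟩ with hz0fin
    set u_ : Fin chi → V → ℝ := fun j v => if C v = j then ν v else 0 with hu_
    set w_ : {j : Fin chi // j ≠ z0fin} → V → ℝ := fun j => ν - (chi : ℝ) • u_ j.1 with hw_
    have hw : ∀ j, G.adjMatrix ℝ *ᵥ w_ j = lamn • w_ j := fun j => key C j.1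
    have hind : LinearIndependent ℝ w_ := by
      rw [Fintype.linearIndependent_iff]
      intro g hg
      obtain ⟨z0, hz0⟩ := hsurj C z0fin
      have hgsum : ∑ j, g j = 0 := by
        have h := congrFun hg z0
        rw [Finset.sum_apply] at h
        simp only [hw_, Pi.sub_apply, Pi.smul_apply, smul_eq_mul, Pi.zero_apply] at h
        have hz : ∀ j : {j : Fin chi // j ≠ z0fin}, u_ j.1 z0 = 0 := by
          intro j
          simp only [hu_]
          rw [if_neg]
          rw [hz0]
          exact fun hh => j.2 hh.symm
        rw [Finset.sum_congr rfl (fun j _ => by rw [hz j, mul_zero, sub_zero])] at h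
        rw [← Finset.sum_mul] at h
        exact (mul_eq_zero.mp h).resolve_right (hpos z0).ne'
      intro j
      obtain ⟨z, hz⟩ := hsurj C j.1
      have h := congrFun hg z
      rw [Finset.sum_apply] at h
      simp only [hw_, Pi.sub_apply, Pi.smul_apply, smul_eq_mul, Pi.zero_apply] at h
      have huz : ∀ k : {j : Fin chi // j ≠ z0fin}, u_ k.1 z = if k = j then ν z else 0 := by
        intro k
        by_cases hk : k = j
        · subst hk; simp [hu_, hz]
        · have hne : ¬ (C z = k.1) := by rw [hz]; exact fun hh => hk (Subtype.ext hh.symm)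
          rw [if_neg hk]
          simp only [hu_]
          rw [if_neg hne]
      have h2 : ∑ k : {j : Fin chi // j ≠ z0fin}, (g k * ν z - g k * ((chi:ℝ) * u_ k.1 z)) = 0 := by
        rw [← h]
        refine Finset.sum_congr rfl fun k _ => by ring
      rw [Finset.sum_sub_distrib, ← Finset.sum_mul, hgsum, zero_mul, zero_sub, neg_eq_zero] at h2
      rw [Finset.sum_congr rfl (fun k _ => by rw [huz k])] at h2
      simp only [mul_ite, mul_zero] at h2
      rw [Finset.sum_ite_eq' Finset.univ j (fun k => g k * ((chi:ℝ) * ν z)),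
        if_pos (Finset.mem_univ j)] at h2
      rcases mul_eq_zero.mp h2 with h3 | h3
      · exact h3
      · exact absurd h3 (mul_ne_zero hrne (hpos z).ne')
    have hcount := hoff_eigencount (G.adjMatrix ℝ) hA lamn w_ hw hind
    have hcard : Fintype.card {j : Fin chi // j ≠ z0fin} = chi - 1 := by
      have h1 : Fintype.card {j : Fin chi // ¬ (j = z0fin)} =
          Fintype.card (Fin chi) - Fintype.card {j : Fin chi // j = z0fin} :=
        Fintype.card_subtype_compl _
      simpa using h1
    omega
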